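/- There is a bijection between non-crossing partitions of {1,...,n} and lattice paths (i(1),...,i(n)) with i(m) ∈ {−1, 0, 1, ..., n−1}, satisfying i(1)+⋯+i(m) ≤ 0 for all m = 1,...,n and i(1)+⋯+i(n) = 0. The bijection sends a partition π to the sequence with i(m) = #V − 1 if m is the last element of its block V in π, and i(m) = −1 otherwise. -/
import Mathlib



open scoped Classical


open scoped Classical

def NoCrossing {N : ℕ} (π : Finset (Finset (Fin N))) : Prop :=
  ¬ ∃ p1 q1 p2 q2 : Fin N, p1 < q1 ∧ q1 < p2 ∧ p2 < q2 ∧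
      (∃ V ∈ π, p1 ∈ V ∧ p2 ∈ V) ∧ (∃ W ∈ π, q1 ∈ W ∧ q2 ∈ W) ∧
      ¬(∃ V ∈ π, p1 ∈ V ∧ q1 ∈ V)

def IsPartition {N : ℕ} (π : Finset (Finset (Fin N))) : Prop :=
  (∀ V ∈ π, V.Nonempty) ∧ ∀ i : Fin N, ∃! V, V ∈ π ∧ i ∈ V

noncomputable def NCPartitions (N : ℕ) : Finset (Finset (Finset (Fin N))) :=
  Finset.univ.filter fun π => IsPartition π ∧ NoCrossing π

noncomputable def cumProd {A : Type*} [Ring A] (k : ∀ n : ℕ, (Fin n → A) → ℂ)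
    {N : ℕ} (π : Finset (Finset (Fin N))) (a : Fin N → A) : ℂ :=
  ∏ V ∈ π, k V.card (fun i => a (V.orderEmbOfFin rfl i))

def MomentCumulant {A : Type*} [Ring A] [Algebra ℂ A] (φ : A →ₗ[ℂ] ℂ)
    (k : ∀ n : ℕ, (Fin n → A) → ℂ) : Prop :=
  ∀ (N : ℕ) (a : Fin N → A), φ (List.ofFn a).prod = ∑ π ∈ NCPartitions N, cumProd k π a

def FreeFamily {A : Type*} [Ring A] [Algebra ℂ A] (φ : A →ₗ[ℂ] ℂ)
    {ι : Type*} (S : ι → Subalgebra ℂ A) : Prop :=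
  ∀ (len : ℕ) (a : Fin len → A) (j : Fin len → ι),
    (∀ i, a i ∈ S (j i)) →
    (∀ (i : ℕ) (h1 : i + 1 < len), j ⟨i, by omega⟩ ≠ j ⟨i + 1, h1⟩) →
    (∀ i, φ (a i) = 0) →
    φ (List.ofFn a).prod = 0

/-- The lattice path associated to a partition: `i m = #V - 1` if `m` is the last element of
its block `V`, and `-1` otherwise. -/
noncomputable def pathOf {n : ℕ} (π : Finset (Finset (Fin n))) (m : Fin n) : ℤ :=
  if h : ∃ V, V ∈ π ∧ m ∈ V ∧ ∀ j ∈ V, j ≤ m then ((h.choose.card : ℤ) - 1) else -1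


set_option linter.unusedSectionVars false
namespace NCPbij

variable {n : ℕ}

noncomputable def S (i : Fin n → ℤ) (m : Fin n) : ℤ :=
  ∑ j ∈ Finset.univ.filter (· ≤ m), i j

noncomputable def T (i : Fin n → ℤ) (k : ℕ) : ℤ :=
  ∑ j ∈ Finset.univ.filter (fun j : Fin n => (j : ℕ) < k), i j

lemma T_zero (i : Fin n → ℤ) : T i 0 = 0 := by simp [T]

lemma S_eq_T (i : Fin n → ℤ) (m : Fin n) : S i m = T i (m.val + 1) := by
  unfold S T; congr 1; ext j
  simp only [Finset.mem_filter, Finset.mem_univ, true_and, Fin.le_def, Nat.lt_succ_iff]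

lemma T_succ (i : Fin n → ℤ) (k : ℕ) (h : k < n) : T i (k + 1) = T i k + i ⟨k, h⟩ := by
  unfold T
  have he : Finset.univ.filter (fun j : Fin n => (j : ℕ) < k + 1)
      = insert ⟨k, h⟩ (Finset.univ.filter fun j : Fin n => (j : ℕ) < k) := by
    ext j; simp [Fin.ext_iff]; omega
  rw [he, Finset.sum_insert (by simp)]
  ring

lemma T_all (i : Fin n → ℤ) {k : ℕ} (h : n ≤ k) : T i k = ∑ j, i j := by
  unfold T; congr 1
  ext j; simpa using lt_of_lt_of_le j.isLt h

lemma S_eq (i : Fin n → ℤ) (m : Fin n) : S i m = T i m.val + i m := by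
  rw [S_eq_T, T_succ i m.val m.isLt]

lemma first_cross (T : ℕ → ℤ) (hstep : ∀ k, T k - 1 ≤ T (k + 1)) {a b : ℕ} {v : ℤ}
    (hab : a ≤ b) (ha : v < T a) (hb : T b ≤ v) :
    ∃ c, a < c ∧ c ≤ b ∧ T c = v ∧ v < T (c - 1) := by
  have hx : ∃ c, a < c ∧ c ≤ b ∧ T c ≤ v := by
    refine ⟨b, lt_of_le_of_ne hab ?_, le_refl b, hb⟩
    rintro rfl; exact absurd hb (not_le.2 ha)
  classical
  obtain ⟨hac, hcb, hcv⟩ := Nat.find_spec hx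
  set c := Nat.find hx with hc
  have hmin : ∀ d, a ≤ d → d < c → v < T d := by
    intro d had hdc
    rcases eq_or_lt_of_le had with rfl | h
    · exact ha
    · by_contra hle; push_neg at hle
      exact Nat.find_min hx hdc ⟨h, le_trans (le_of_lt hdc) hcb, hle⟩
  have h1 : 0 < c := lt_of_le_of_lt (Nat.zero_le a) hac
  have hprev : v < T (c - 1) := hmin (c - 1) (by omega) (by omega)
  have hTc : T c = v := by
    have := hstep (c - 1)
    have hcc : c - 1 + 1 = c := by omega
    rw [hcc] at this
    omega
  exact ⟨c, hac, hcb, hTc, hprev⟩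

noncomputable def Fset (i : Fin n → ℤ) (j : Fin n) : Finset (Fin n) :=
  Finset.univ.filter (fun m => j < m ∧ S i j < S i m)

noncomputable def f (i : Fin n → ℤ) (j : Fin n) : Fin n :=
  if h : i j < 0 ∧ (Fset i j).Nonempty then (Fset i j).min' h.2 else j

noncomputable def toBlocks (i : Fin n → ℤ) : Finset (Finset (Fin n)) :=
  Finset.univ.image (fun j => Finset.univ.filter (fun x => f i x = f i j))

lemma mem_Fset {i : Fin n → ℤ} {j x : Fin n} : x ∈ Fset i j ↔ j < x ∧ S i j < S i x := by
  simp [Fset]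

lemma f_of_nonneg {i : Fin n → ℤ} {j : Fin n} (h : 0 ≤ i j) : f i j = j := by
  rw [f, dif_neg]; rintro ⟨h1, _⟩; omega

lemma Tm_le {i : Fin n → ℤ} {j m' m : Fin n} (hjm' : j < m') (hm'm : m' ≤ m)
    (hmid : ∀ x, j < x → x < m → S i x ≤ S i j) : T i m'.val ≤ S i j := by
  have h1 : 1 ≤ m'.val := by
    have := hjm'; rw [Fin.lt_def] at this; omega
  have hlt : m'.val - 1 < n := by have := m'.isLt; omega
  set x : Fin n := ⟨m'.val - 1, hlt⟩ with hxdef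
  have hTx : T i m'.val = S i x := by
    rw [S_eq_T]; congr 1; simp [hxdef]; omega
  rw [hTx]
  have hjx : j ≤ x := by
    rw [Fin.le_def]; rw [Fin.lt_def] at hjm'; simp [hxdef]; omega
  rcases eq_or_lt_of_le hjx with rfl | h
  · exact le_refl _
  · refine hmid x h (lt_of_lt_of_le ?_ hm'm)
    rw [Fin.lt_def]; simp [hxdef]; omega

section PathSide

variable {i : Fin n → ℤ}
variable (H1 : ∀ m, -1 ≤ i m) (H2 : ∀ m, S i m ≤ 0) (H3 : ∑ j, i j = 0)

include H1 H2 H3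

omit H1 H2 H3 in
lemma hstep' (H1 : ∀ m, -1 ≤ i m) : ∀ k, T i k - 1 ≤ T i (k + 1) := by
  intro k
  by_cases h : k < n
  · rw [T_succ i k h]; have := H1 ⟨k, h⟩; omega
  · push_neg at h
    rw [T_all i h, T_all i (by omega : n ≤ k + 1)]; omega

omit H1 in
lemma T_nonpos : ∀ k, T i k ≤ 0 := by
  intro k
  match k with
  | 0 => rw [T_zero]
  | (k + 1) =>
    by_cases h : k < n
    · have := H2 ⟨k, h⟩; rw [S_eq_T] at this; exact this
    · push_neg at h
      rw [T_all i (by omega : n ≤ k + 1), H3]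

omit H1 H2 in
lemma T_n : T i n = 0 := by rw [T_all i (le_refl n), H3]

lemma Fset_nonempty {j : Fin n} (hij : i j < 0) : (Fset i j).Nonempty := by
  have hn : 0 < n := lt_of_le_of_lt (Nat.zero_le _) j.isLt
  set last : Fin n := ⟨n - 1, by omega⟩ with hlast
  have hSl : S i last = 0 := by
    rw [S_eq_T]
    have : (last : ℕ) + 1 = n := by simp [hlast]; omega
    rw [this, T_n H3]
  have hSj : S i j < 0 := by
    have h1 := T_nonpos H2 H3 j.val
    rw [S_eq]; omega
  refine ⟨last, ?_⟩
  rw [Fset, Finset.mem_filter]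
  refine ⟨Finset.mem_univ _, ?_, by omega⟩
  rw [Fin.lt_def]
  have hj1 : (j : ℕ) ≤ n - 1 := by have := j.isLt; omega
  rcases lt_or_eq_of_le hj1 with h | h
  · simpa [hlast] using h
  · exfalso
    have : j = last := by rw [Fin.ext_iff]; simpa [hlast] using h
    rw [this, hSl] at hSj; omega

lemma f_spec {j : Fin n} (hij : i j < 0) :
    j < f i j ∧ S i j < S i (f i j) ∧ ∀ m', j < m' → m' < f i j → S i m' ≤ S i j := by
  have hne := Fset_nonempty H1 H2 H3 hij
  have hf : f i j = (Fset i j).min' hne := by rw [f, dif_pos ⟨hij, hne⟩]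
  have hmem := (Fset i j).min'_mem hne
  rw [← hf] at hmem
  rw [Fset, Finset.mem_filter] at hmem
  refine ⟨hmem.2.1, hmem.2.2, ?_⟩
  intro m' h1 h2
  by_contra hc; push_neg at hc
  have : m' ∈ Fset i j := by rw [Fset, Finset.mem_filter]; exact ⟨Finset.mem_univ _, h1, hc⟩
  have := (Fset i j).min'_le m' this
  rw [← hf] at this
  exact absurd h2 (not_lt.2 this)

lemma f_pos_step {j : Fin n} (hij : i j < 0) : 0 < i (f i j) := by
  obtain ⟨h1, h2, h3⟩ := f_spec H1 H2 H3 hij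
  have hT : T i (f i j).val ≤ S i j := Tm_le h1 (le_refl _) h3
  have := S_eq i (f i j)
  omega

lemma f_f (j : Fin n) : f i (f i j) = f i j := by
  by_cases h : 0 ≤ i j
  · rw [f_of_nonneg h, f_of_nonneg h]
  · push_neg at h
    exact f_of_nonneg (le_of_lt (f_pos_step H1 H2 H3 h))

lemma le_f (j : Fin n) : j ≤ f i j := by
  by_cases h : 0 ≤ i j
  · rw [f_of_nonneg h]
  · push_neg at h
    exact le_of_lt (f_spec H1 H2 H3 h).1

lemma nesting {j j' : Fin n} (h1 : j < j') (h2 : j' < f i j) : f i j' ≤ f i j := by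
  have hij : i j < 0 := by
    by_contra hc; push_neg at hc
    rw [f_of_nonneg hc] at h2
    exact absurd h1 (not_lt.2 (le_of_lt h2))
  obtain ⟨_, hS, hmid⟩ := f_spec H1 H2 H3 hij
  by_cases h' : 0 ≤ i j'
  · rw [f_of_nonneg h']; exact le_of_lt h2
  · push_neg at h'
    have hS' : S i j' ≤ S i j := hmid j' h1 h2
    have hmemF : f i j ∈ Fset i j' := by
      rw [Fset, Finset.mem_filter]
      exact ⟨Finset.mem_univ _, h2, lt_of_le_of_lt hS' hS⟩
    have hne' : (Fset i j').Nonempty := ⟨_, hmemF⟩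
    rw [f, dif_pos ⟨h', hne'⟩]
    exact Finset.min'_le _ _ hmemF

lemma fiber_lt {j j' m : Fin n} (hj : f i j = m) (hj' : f i j' = m) (h1 : j < j')
    (h2 : j' ≠ m) : S i j' < S i j := by
  have hj'm : j' < m := lt_of_le_of_ne (hj' ▸ le_f H1 H2 H3 j') h2
  have hjm : j < m := lt_trans h1 hj'm
  have hij : i j < 0 := by
    by_contra hc; push_neg at hc
    rw [f_of_nonneg hc] at hj; subst hj; exact absurd hjm (lt_irrefl _)
  have hij' : i j' < 0 := by
    by_contra hc; push_neg at hc
    rw [f_of_nonneg hc] at hj'; subst hj'; exact absurd hj'm (lt_irrefl _)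
  obtain ⟨_, _, hmid⟩ := f_spec H1 H2 H3 hij
  rw [hj] at hmid
  have hT : T i j'.val ≤ S i j := Tm_le h1 (le_of_lt hj'm) hmid
  have he : i j' = -1 := le_antisymm (by omega) (H1 j')
  have := S_eq i j'
  omega

lemma fiber_card {m : Fin n} (hm : 0 ≤ i m) :
    ((Finset.univ.filter (fun x => f i x = m)).card : ℤ) = i m + 1 := by
  have hfm : f i m = m := f_of_nonneg hm
  set E := Finset.univ.filter (fun x => f i x = m ∧ x ≠ m) with hE
  have hsplit : Finset.univ.filter (fun x => f i x = m) = insert m E := by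
    ext x
    simp only [hE, Finset.mem_filter, Finset.mem_univ, true_and, Finset.mem_insert]
    constructor
    · intro h
      by_cases hx : x = m
      · exact Or.inl hx
      · exact Or.inr ⟨h, hx⟩
    · rintro (rfl | ⟨h, _⟩)
      · exact hfm
      · exact h
  have hmnot : m ∉ E := by simp [hE]
  -- basic facts about elements of E
  have hEfact : ∀ j ∈ E, j < m ∧ i j < 0 ∧ S i j < S i m ∧
      (∀ x, j < x → x < m → S i x ≤ S i j) := by
    intro j hj
    rw [hE, Finset.mem_filter] at hj
    obtain ⟨_, hfj, hjne⟩ := hj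
    have hij : i j < 0 := by
      by_contra hc; push_neg at hc
      rw [f_of_nonneg hc] at hfj; exact hjne hfj
    obtain ⟨ha, hb, hc⟩ := f_spec H1 H2 H3 hij
    rw [hfj] at ha hb hc
    exact ⟨ha, hij, hb, hc⟩
  have hcard : E.card = (Finset.Icc (S i m - i m) (S i m - 1)).card := by
    apply Finset.card_bij (fun j _ => S i j)
    · intro j hj
      obtain ⟨h1, h2, h3, h4⟩ := hEfact j hj
      rw [Finset.mem_Icc]
      have hT : T i m.val ≤ S i j := Tm_le h1 (le_refl _) h4
      have := S_eq i m
      omega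
    · intro a ha b hb heq
      by_contra hne
      rw [hE, Finset.mem_filter] at ha hb
      rcases lt_trichotomy a b with h | h | h
      · have := fiber_lt H1 H2 H3 ha.2.1 hb.2.1 h hb.2.2; omega
      · exact hne h
      · have := fiber_lt H1 H2 H3 hb.2.1 ha.2.1 h ha.2.2; omega
    · -- surjectivity
      intro v hv
      rw [Finset.mem_Icc] at hv
      have hSm : S i m ≤ 0 := H2 m
      have hv0 : v < 0 := by omega
      have hTm : T i m.val ≤ v := by have := S_eq i m; omega
      set B := Finset.univ.filter (fun j : Fin n => j < m ∧ S i j = v ∧ i j < 0) with hB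
      have hmk : ∀ c, 0 < c → c ≤ (m : ℕ) → T i c = v → v < T i (c - 1) →
          ∃ j : Fin n, j ∈ B ∧ (j : ℕ) = c - 1 := by
        intro c h0 hcm hTc hTp
        have hcn : c - 1 < n := by have := m.isLt; omega
        refine ⟨⟨c - 1, hcn⟩, ?_, rfl⟩
        have hval : ((⟨c - 1, hcn⟩ : Fin n) : ℕ) = c - 1 := rfl
        have hSc : S i (⟨c - 1, hcn⟩ : Fin n) = v := by
          rw [S_eq_T, hval]
          have hcc : (c - 1) + 1 = c := by omega
          rw [hcc]; exact hTc
        have hSeq := S_eq i (⟨c - 1, hcn⟩ : Fin n)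
        rw [hval, hSc] at hSeq
        rw [hB, Finset.mem_filter]
        refine ⟨Finset.mem_univ _, ?_, hSc, by omega⟩
        rw [Fin.lt_def, hval]; omega
      have hBne : B.Nonempty := by
        obtain ⟨c, h0, hcm, hTc, hTp⟩ := first_cross (T i) (hstep' H1) (Nat.zero_le _)
          (by rw [T_zero]; omega) hTm
        obtain ⟨j, hj, _⟩ := hmk c h0 hcm hTc hTp
        exact ⟨j, hj⟩
      obtain ⟨-, hjm, hSj, hij⟩ := Finset.mem_filter.1 (B.max'_mem hBne)
      set j := B.max' hBne with hjdef
      have hmid : ∀ x : Fin n, j < x → x < m → S i x ≤ v := by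
        intro x hx1 hx2
        by_contra hc; push_neg at hc
        have hTx : v < T i (x.val + 1) := by rw [← S_eq_T]; exact hc
        have hab : x.val + 1 ≤ m.val := by rw [Fin.lt_def] at hx2; omega
        obtain ⟨c, h0, hcm, hTc, hTp⟩ := first_cross (T i) (hstep' H1) hab hTx hTm
        obtain ⟨j', hj', hj'v⟩ := hmk c (by omega) hcm hTc hTp
        have hle := B.le_max' j' hj'
        rw [Fin.le_def] at hle
        rw [Fin.lt_def] at hx1
        simp only [← hjdef] at hle
        omega
      have hmF : m ∈ Fset i j := mem_Fset.2 ⟨hjm, by omega⟩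
      have hfj : f i j = m := by
        have hne' : (Fset i j).Nonempty := ⟨_, hmF⟩
        rw [f, dif_pos ⟨hij, hne'⟩]
        apply le_antisymm (Finset.min'_le _ _ hmF)
        have hmin'mem := mem_Fset.1 ((Fset i j).min'_mem hne')
        by_contra hcc; push_neg at hcc
        have := hmid _ hmin'mem.1 hcc
        omega
      refine ⟨j, ?_, hSj⟩
      rw [hE, Finset.mem_filter]
      exact ⟨Finset.mem_univ _, hfj, ne_of_lt hjm⟩
  have hIcc : (Finset.Icc (S i m - i m) (S i m - 1)).card = (i m).toNat := by
    rw [Int.card_Icc]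
    congr 1; omega
  rw [hsplit, Finset.card_insert_of_notMem hmnot, hcard, hIcc]
  push_cast [Int.toNat_of_nonneg hm]
  ring

omit H1 H2 H3 in
lemma block_unique {V : Finset (Fin n)} {x : Fin n} (hV : V ∈ toBlocks i) (hx : x ∈ V) :
    V = Finset.univ.filter (fun y => f i y = f i x) := by
  rw [toBlocks, Finset.mem_image] at hV
  obtain ⟨j, -, rfl⟩ := hV
  rw [Finset.mem_filter] at hx
  ext y
  simp only [Finset.mem_filter, Finset.mem_univ, true_and, hx.2]

omit H1 H2 H3 in
lemma toBlocks_isPartition : IsPartition (toBlocks i) := by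
  constructor
  · intro V hV
    rw [toBlocks, Finset.mem_image] at hV
    obtain ⟨j, -, rfl⟩ := hV
    exact ⟨j, by simp⟩
  · intro x
    refine ⟨Finset.univ.filter (fun y => f i y = f i x), ⟨?_, by simp⟩, ?_⟩
    · rw [toBlocks, Finset.mem_image]
      exact ⟨x, Finset.mem_univ x, rfl⟩
    · rintro V ⟨hV, hx⟩
      exact block_unique hV hx

lemma toBlocks_noCrossing : NoCrossing (toBlocks i) := by
  rintro ⟨p1, q1, p2, q2, h12, h23, h34, ⟨V, hV, hp1, hp2⟩, ⟨W, hW, hq1, hq2⟩, hno⟩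
  have hfp : f i p1 = f i p2 := by
    have h1 := block_unique hV hp1
    rw [h1, Finset.mem_filter] at hp2
    exact hp2.2.symm
  have hfq : f i q1 = f i q2 := by
    have h1 := block_unique hW hq1
    rw [h1, Finset.mem_filter] at hq2
    exact hq2.2.symm
  have hne : f i p1 ≠ f i q1 := by
    intro heq
    refine hno ⟨Finset.univ.filter (fun y => f i y = f i p1), ?_, by simp, by simp [heq]⟩
    rw [toBlocks, Finset.mem_image]
    exact ⟨p1, Finset.mem_univ _, rfl⟩
  have hp2f : p2 ≤ f i p1 := hfp ▸ le_f H1 H2 H3 p2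
  have hq2f : q2 ≤ f i q1 := hfq ▸ le_f H1 H2 H3 q2
  have hq1f : q1 < f i p1 := lt_of_lt_of_le h23 hp2f
  have h5 : f i q1 ≤ f i p1 := nesting H1 H2 H3 h12 hq1f
  rcases lt_or_eq_of_le h5 with h6 | h6
  · have hp2q : p2 < f i q1 := lt_of_lt_of_le h34 hq2f
    have h7 : f i p2 ≤ f i q1 := nesting H1 H2 H3 h23 hp2q
    rw [← hfp] at h7
    exact absurd h6 (not_lt.2 h7)
  · exact hne h6.symm

lemma pathOf_toBlocks : pathOf (toBlocks i) = i := by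
  funext m
  by_cases hm : 0 ≤ i m
  · have hfm : f i m = m := f_of_nonneg hm
    have hVmem : Finset.univ.filter (fun x => f i x = m) ∈ toBlocks i := by
      rw [toBlocks, Finset.mem_image]
      exact ⟨m, Finset.mem_univ _, by rw [hfm]⟩
    have hex : ∃ V, V ∈ toBlocks i ∧ m ∈ V ∧ ∀ j ∈ V, j ≤ m := by
      refine ⟨Finset.univ.filter (fun x => f i x = m), hVmem, by simp [hfm], ?_⟩
      intro j hj
      rw [Finset.mem_filter] at hj
      exact hj.2 ▸ le_f H1 H2 H3 j
    rw [pathOf, dif_pos hex]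
    have hspec := hex.choose_spec
    have hch : hex.choose = Finset.univ.filter (fun x => f i x = m) := by
      rw [block_unique hspec.1 hspec.2.1, hfm]
    rw [hch]
    have := fiber_card H1 H2 H3 hm
    omega
  · push_neg at hm
    have him : i m = -1 := le_antisymm (by omega) (H1 m)
    have hnex : ¬ ∃ V, V ∈ toBlocks i ∧ m ∈ V ∧ ∀ j ∈ V, j ≤ m := by
      rintro ⟨V, hV, hmV, hle⟩
      have hb := block_unique hV hmV
      have hfmem : f i m ∈ V := by
        rw [hb, Finset.mem_filter]
        exact ⟨Finset.mem_univ _, f_f H1 H2 H3 m⟩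
      have := hle (f i m) hfmem
      exact absurd this (not_le.2 (f_spec H1 H2 H3 hm).1)
    rw [pathOf, dif_neg hnex, him]

end PathSide

section PartitionSide

noncomputable def blk (π : Finset (Finset (Fin n))) (x : Fin n) : Finset (Fin n) :=
  if h : ∃ V, V ∈ π ∧ x ∈ V then h.choose else ∅

noncomputable def mx (π : Finset (Finset (Fin n))) (x : Fin n) : Fin n :=
  if h : (blk π x).Nonempty then (blk π x).max' h else x

variable {π : Finset (Finset (Fin n))} (hπ : IsPartition π)

include hπ

lemma blk_spec (x : Fin n) : blk π x ∈ π ∧ x ∈ blk π x := by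
  have hex : ∃ V, V ∈ π ∧ x ∈ V := (hπ.2 x).exists
  rw [blk, dif_pos hex]
  exact hex.choose_spec

lemma blk_eq {V : Finset (Fin n)} {x : Fin n} (hV : V ∈ π) (hx : x ∈ V) : blk π x = V :=
  (hπ.2 x).unique ⟨(blk_spec hπ x).1, (blk_spec hπ x).2⟩ ⟨hV, hx⟩

lemma mx_mem (x : Fin n) : mx π x ∈ blk π x ∧ ∀ y ∈ blk π x, y ≤ mx π x := by
  have hne : (blk π x).Nonempty := ⟨x, (blk_spec hπ x).2⟩
  rw [mx, dif_pos hne]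
  exact ⟨(blk π x).max'_mem hne, fun y hy => (blk π x).le_max' y hy⟩

lemma le_mx (x : Fin n) : x ≤ mx π x := (mx_mem hπ x).2 x (blk_spec hπ x).2

lemma blk_mx (x : Fin n) : blk π (mx π x) = blk π x :=
  blk_eq hπ (blk_spec hπ x).1 (mx_mem hπ x).1

lemma mx_mx (x : Fin n) : mx π (mx π x) = mx π x := by
  apply le_antisymm
  · exact (mx_mem hπ x).2 _ (by rw [← blk_mx hπ x]; exact (mx_mem hπ (mx π x)).1)
  · exact le_mx hπ (mx π x)

lemma mx_congr {x y : Fin n} (h : blk π x = blk π y) : mx π x = mx π y :=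
  le_antisymm ((mx_mem hπ y).2 _ (h ▸ (mx_mem hπ x).1))
    ((mx_mem hπ x).2 _ (h ▸ (mx_mem hπ y).1))

lemma mx_eq_of_mem {V : Finset (Fin n)} {x : Fin n} (hV : V ∈ π) (hx : x ∈ V)
    (hne : V.Nonempty) : mx π x = V.max' hne := by
  have hb : blk π x = V := blk_eq hπ hV hx
  apply le_antisymm
  · exact V.le_max' _ (hb ▸ (mx_mem hπ x).1)
  · exact (mx_mem hπ x).2 _ (hb.symm ▸ V.max'_mem hne)

lemma pathOf_max {m : Fin n} (hm : mx π m = m) :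
    pathOf π m = ((blk π m).card : ℤ) - 1 := by
  have hex : ∃ V, V ∈ π ∧ m ∈ V ∧ ∀ j ∈ V, j ≤ m :=
    ⟨blk π m, (blk_spec hπ m).1, (blk_spec hπ m).2, fun j hj => hm ▸ (mx_mem hπ m).2 j hj⟩
  rw [pathOf, dif_pos hex]
  have hspec := hex.choose_spec
  have : hex.choose = blk π m := (blk_eq hπ hspec.1 hspec.2.1).symm
  rw [this]

lemma pathOf_nonmax {m : Fin n} (hm : mx π m ≠ m) : pathOf π m = -1 := by
  rw [pathOf, dif_neg]
  rintro ⟨V, hV, hmV, hle⟩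
  have hb : blk π m = V := blk_eq hπ hV hmV
  exact hm (le_antisymm (hle (mx π m) (hb ▸ (mx_mem hπ m).1)) (le_mx hπ m))

lemma sum_blocks (g : Fin n → ℤ) (A : Finset (Fin n)) :
    ∑ j ∈ A, g j = ∑ V ∈ π, ∑ j ∈ V.filter (· ∈ A), g j := by
  have hA : A = π.biUnion (fun V => V.filter (· ∈ A)) := by
    ext x
    simp only [Finset.mem_biUnion, Finset.mem_filter]
    constructor
    · intro hx; exact ⟨blk π x, (blk_spec hπ x).1, (blk_spec hπ x).2, hx⟩
    · rintro ⟨V, -, -, hx⟩; exact hx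
  conv_lhs => rw [hA]
  apply Finset.sum_biUnion
  intro V hV W hW hne
  have hdisj : Disjoint V W := by
    rw [Finset.disjoint_left]
    intro x hxV hxW
    rw [Finset.mem_coe] at hV hW
    exact hne (by rw [← blk_eq hπ hV hxV, blk_eq hπ hW hxW])
  exact hdisj.mono (Finset.filter_subset _ _) (Finset.filter_subset _ _)

lemma block_sum {V : Finset (Fin n)} (hV : V ∈ π) (m : Fin n) :
    ∑ j ∈ V.filter (· ≤ m), pathOf π j
      = -(((V.filter (fun x => x ≤ m ∧ m < mx π x)).card : ℤ)) := by
  have hne : V.Nonempty := hπ.1 V hV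
  set MV := V.max' hne with hMVdef
  have hmx : ∀ x ∈ V, mx π x = MV := fun x hx => mx_eq_of_mem hπ hV hx hne
  by_cases hMV : MV ≤ m
  · have h1 : V.filter (fun x => x ≤ m ∧ m < mx π x) = ∅ := by
      rw [Finset.filter_eq_empty_iff]
      intro x hx
      rw [hmx x hx]
      rintro ⟨-, hc⟩
      exact absurd hMV (not_le.2 hc)
    have h2 : V.filter (· ≤ m) = V := by
      rw [Finset.filter_eq_self]
      intro x hx
      exact le_trans (V.le_max' x hx) hMV
    rw [h1, h2]
    simp only [Finset.card_empty, Nat.cast_zero, neg_zero]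
    rw [← Finset.sum_erase_add V _ (V.max'_mem hne), ← hMVdef]
    have hMVpath : pathOf π MV = (V.card : ℤ) - 1 := by
      have hmm : mx π MV = MV := hmx MV (V.max'_mem hne)
      rw [pathOf_max hπ hmm, blk_eq hπ hV (V.max'_mem hne)]
    have herase : ∀ j ∈ V.erase MV, pathOf π j = -1 := by
      intro j hj
      rw [Finset.mem_erase] at hj
      apply pathOf_nonmax hπ
      rw [hmx j hj.2]
      exact fun h => hj.1 h.symm
    rw [Finset.sum_congr rfl herase, Finset.sum_const, Finset.card_erase_of_mem (by
      rw [hMVdef]; exact V.max'_mem hne), hMVpath]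
    have hcard : 1 ≤ V.card := Finset.card_pos.2 hne
    simp only [nsmul_eq_mul]
    push_cast [Nat.cast_sub hcard]
    ring
  · push_neg at hMV
    have h1 : V.filter (fun x => x ≤ m ∧ m < mx π x) = V.filter (· ≤ m) := by
      apply Finset.filter_congr
      intro x hx
      rw [hmx x hx]
      constructor
      · exact fun h => h.1
      · exact fun h => ⟨h, hMV⟩
    rw [h1]
    have h2 : ∀ j ∈ V.filter (· ≤ m), pathOf π j = -1 := by
      intro j hj
      rw [Finset.mem_filter] at hj
      apply pathOf_nonmax hπ
      rw [hmx j hj.1]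
      intro h
      exact absurd (h ▸ hMV) (not_lt.2 hj.2)
    rw [Finset.sum_congr rfl h2, Finset.sum_const]
    simp [nsmul_eq_mul]

noncomputable def OpenS (π : Finset (Finset (Fin n))) (m : Fin n) : Finset (Fin n) :=
  Finset.univ.filter (fun x => x ≤ m ∧ m < mx π x)

lemma S_pathOf (m : Fin n) : S (pathOf π) m = -(((OpenS π m).card : ℤ)) := by
  have hfix : ∀ V : Finset (Fin n),
      V.filter (· ∈ Finset.univ.filter (· ≤ m)) = V.filter (· ≤ m) := by
    intro V; apply Finset.filter_congr; intro x hx; simp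
  have h1 : S (pathOf π) m
      = ∑ V ∈ π, -(((V.filter (fun x => x ≤ m ∧ m < mx π x)).card : ℤ)) := by
    rw [S, sum_blocks hπ (pathOf π) (Finset.univ.filter (· ≤ m))]
    apply Finset.sum_congr rfl
    intro V hV
    rw [hfix V, block_sum hπ hV m]
  have h2 : (((OpenS π m).card : ℤ))
      = ∑ V ∈ π, ((V.filter (fun x => x ≤ m ∧ m < mx π x)).card : ℤ) := by
    have hcs : ((OpenS π m).card : ℤ) = ∑ j ∈ OpenS π m, (1 : ℤ) := by
      simp
    rw [hcs, sum_blocks hπ (fun _ => (1 : ℤ)) (OpenS π m)]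
    apply Finset.sum_congr rfl
    intro V hV
    have : V.filter (· ∈ OpenS π m) = V.filter (fun x => x ≤ m ∧ m < mx π x) := by
      apply Finset.filter_congr; intro x hx; simp [OpenS]
    rw [this]
    simp
  rw [h1, h2, ← Finset.sum_neg_distrib]

end PartitionSide

section PartitionSide2

variable {π : Finset (Finset (Fin n))} (hπ : IsPartition π) (hnc : NoCrossing π)

include hπ hnc

lemma S_lt_mx {j : Fin n} (hj : mx π j ≠ j) :
    S (pathOf π) j < S (pathOf π) (mx π j) := by
  have hjM : j < mx π j := lt_of_le_of_ne (le_mx hπ j) (Ne.symm hj)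
  have hsub : OpenS π (mx π j) ⊆ OpenS π j := by
    intro x hx
    simp only [OpenS, Finset.mem_filter, Finset.mem_univ, true_and] at hx ⊢
    obtain ⟨hxM, hMx⟩ := hx
    have hxj : x ≤ j := by
      by_contra hc; push_neg at hc
      have hxneM : x ≠ mx π j := by
        rintro rfl
        rw [mx_mx hπ j] at hMx
        exact lt_irrefl _ hMx
      have hxM' : x < mx π j := lt_of_le_of_ne hxM hxneM
      refine hnc ⟨j, x, mx π j, mx π x, hc, hxM', hMx, ?_, ?_, ?_⟩
      · exact ⟨blk π j, (blk_spec hπ j).1, (blk_spec hπ j).2, (mx_mem hπ j).1⟩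
      · exact ⟨blk π x, (blk_spec hπ x).1, (blk_spec hπ x).2, (mx_mem hπ x).1⟩
      · rintro ⟨V, hV, hjV, hxV⟩
        have : blk π j = blk π x := by rw [blk_eq hπ hV hjV, blk_eq hπ hV hxV]
        rw [mx_congr hπ this] at hMx
        exact lt_irrefl _ hMx
    exact ⟨hxj, lt_trans hjM hMx⟩
  have hjOj : j ∈ OpenS π j := by
    simp only [OpenS, Finset.mem_filter, Finset.mem_univ, true_and]
    exact ⟨le_refl j, hjM⟩
  have hjOM : j ∉ OpenS π (mx π j) := by
    simp only [OpenS, Finset.mem_filter, Finset.mem_univ, true_and]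
    rintro ⟨-, hc⟩
    exact lt_irrefl _ hc
  have hcard : (OpenS π (mx π j)).card < (OpenS π j).card :=
    Finset.card_lt_card ((Finset.ssubset_iff_of_subset hsub).2 ⟨j, hjOj, hjOM⟩)
  rw [S_pathOf hπ, S_pathOf hπ]
  have : ((OpenS π (mx π j)).card : ℤ) < ((OpenS π j).card : ℤ) := by exact_mod_cast hcard
  omega

lemma S_mid_le {j m' : Fin n} (hjm : j < m') (hm' : m' < mx π j) :
    S (pathOf π) m' ≤ S (pathOf π) j := by
  have hsub : OpenS π j ⊆ OpenS π m' := by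
    intro x hx
    simp only [OpenS, Finset.mem_filter, Finset.mem_univ, true_and] at hx ⊢
    obtain ⟨hxj, hjx⟩ := hx
    refine ⟨le_trans hxj (le_of_lt hjm), ?_⟩
    by_cases hbx : mx π x = mx π j
    · rw [hbx]; exact hm'
    · have hxltj : x < j := lt_of_le_of_ne hxj (by rintro rfl; exact hbx rfl)
      have hge : mx π j < mx π x := by
        rcases lt_trichotomy (mx π x) (mx π j) with h | h | h
        · exfalso
          refine hnc ⟨x, j, mx π x, mx π j, hxltj, hjx, h, ?_, ?_, ?_⟩
          · exact ⟨blk π x, (blk_spec hπ x).1, (blk_spec hπ x).2, (mx_mem hπ x).1⟩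
          · exact ⟨blk π j, (blk_spec hπ j).1, (blk_spec hπ j).2, (mx_mem hπ j).1⟩
          · rintro ⟨V, hV, hxV, hjV⟩
            have : blk π x = blk π j := by rw [blk_eq hπ hV hxV, blk_eq hπ hV hjV]
            exact hbx (mx_congr hπ this)
        · exact absurd h hbx
        · exact h
      exact lt_trans hm' hge
  have hcard : (OpenS π j).card ≤ (OpenS π m').card := Finset.card_le_card hsub
  rw [S_pathOf hπ, S_pathOf hπ]
  have : ((OpenS π j).card : ℤ) ≤ ((OpenS π m').card : ℤ) := by exact_mod_cast hcard
  omega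

lemma f_pathOf (j : Fin n) : f (pathOf π) j = mx π j := by
  by_cases hj : mx π j = j
  · have h0 : 0 ≤ pathOf π j := by
      rw [pathOf_max hπ hj]
      have : 0 < (blk π j).card := Finset.card_pos.2 ⟨j, (blk_spec hπ j).2⟩
      omega
    rw [f_of_nonneg h0, hj]
  · have hlt : j < mx π j := lt_of_le_of_ne (le_mx hπ j) (Ne.symm hj)
    have hneg : pathOf π j < 0 := by rw [pathOf_nonmax hπ hj]; norm_num
    have hM : mx π j ∈ Fset (pathOf π) j := mem_Fset.2 ⟨hlt, S_lt_mx hπ hnc hj⟩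
    rw [f, dif_pos ⟨hneg, ⟨_, hM⟩⟩]
    apply le_antisymm (Finset.min'_le _ _ hM)
    apply Finset.le_min'
    intro y hy
    obtain ⟨hy1, hy2⟩ := mem_Fset.1 hy
    by_contra hc; push_neg at hc
    exact absurd (S_mid_le hπ hnc hy1 hc) (not_le.2 hy2)

lemma toBlocks_pathOf : toBlocks (pathOf π) = π := by
  have hfib : ∀ j, Finset.univ.filter (fun x => f (pathOf π) x = f (pathOf π) j)
      = blk π j := by
    intro j
    ext x
    simp only [Finset.mem_filter, Finset.mem_univ, true_and, f_pathOf hπ hnc]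
    constructor
    · intro h
      have h1 : blk π x = blk π j := by
        rw [← blk_mx hπ x, h, blk_mx hπ j]
      rw [← h1]; exact (blk_spec hπ x).2
    · intro hx
      exact mx_congr hπ (blk_eq hπ (blk_spec hπ j).1 hx)
  have himg : toBlocks (pathOf π) = Finset.univ.image (fun j => blk π j) := by
    rw [toBlocks]
    exact Finset.image_congr (fun j _ => hfib j)
  rw [himg]
  ext V
  simp only [Finset.mem_image, Finset.mem_univ, true_and]
  constructor
  · rintro ⟨j, rfl⟩; exact (blk_spec hπ j).1
  · intro hV
    obtain ⟨x, hx⟩ := hπ.1 V hV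
    exact ⟨x, blk_eq hπ hV hx⟩

omit hnc in
lemma pathOf_bounds (m : Fin n) : -1 ≤ pathOf π m ∧ pathOf π m ≤ (n : ℤ) - 1 := by
  by_cases hj : mx π m = m
  · rw [pathOf_max hπ hj]
    have h1 : 0 < (blk π m).card := Finset.card_pos.2 ⟨m, (blk_spec hπ m).2⟩
    have h2 : (blk π m).card ≤ n := by
      have := Finset.card_le_univ (blk π m)
      simpa using this
    omega
  · rw [pathOf_nonmax hπ hj]
    have : 0 < n := lt_of_le_of_lt (Nat.zero_le _) m.isLt
    omega

omit hnc in
lemma pathOf_sum_zero : ∑ j, pathOf π j = 0 := by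
  by_cases hn : n = 0
  · subst hn; simp
  · have hn' : 0 < n := Nat.pos_of_ne_zero hn
    set last : Fin n := ⟨n - 1, by omega⟩ with hlast
    have huniv : Finset.univ.filter (· ≤ last) = (Finset.univ : Finset (Fin n)) := by
      ext j
      simp only [Finset.mem_filter, Finset.mem_univ, true_and, iff_true]
      rw [Fin.le_def]
      have := j.isLt
      simp only [hlast]
      omega
    have h1 : ∑ j, pathOf π j = S (pathOf π) last := by rw [S, huniv]
    rw [h1, S_pathOf hπ]
    have : OpenS π last = ∅ := by
      rw [OpenS, Finset.filter_eq_empty_iff]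
      intro x _
      rintro ⟨-, hc⟩
      have h2 : (mx π x : ℕ) < n := (mx π x).isLt
      rw [Fin.lt_def] at hc
      simp only [hlast] at hc
      omega
    rw [this]
    simp

end PartitionSide2

end NCPbij

theorem ncPartitions_bij_paths (n : ℕ) :
    Set.BijOn (fun π => pathOf π)
      {π | π ∈ NCPartitions n}
      {i : Fin n → ℤ |
        (∀ m, -1 ≤ i m ∧ i m ≤ (n : ℤ) - 1) ∧
        (∀ m : Fin n, ∑ j ∈ Finset.univ.filter (· ≤ m), i j ≤ 0) ∧
        (∑ j, i j = 0)} := by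
  refine ⟨?_, ?_, ?_⟩
  · -- MapsTo
    intro π hπ
    rw [Set.mem_setOf_eq, NCPartitions, Finset.mem_filter] at hπ
    obtain ⟨-, hP, hNC⟩ := hπ
    refine ⟨fun m => NCPbij.pathOf_bounds hP m, fun m => ?_, NCPbij.pathOf_sum_zero hP⟩
    have h := NCPbij.S_pathOf hP m
    rw [NCPbij.S] at h
    show (∑ j ∈ Finset.univ.filter (· ≤ m), pathOf π j) ≤ 0
    rw [h]
    have : (0 : ℤ) ≤ ((NCPbij.OpenS π m).card : ℤ) := Int.natCast_nonneg _
    omega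
  · -- InjOn
    intro π₁ h₁ π₂ h₂ heq
    rw [Set.mem_setOf_eq, NCPartitions, Finset.mem_filter] at h₁ h₂
    have heq' : pathOf π₁ = pathOf π₂ := heq
    rw [← NCPbij.toBlocks_pathOf h₁.2.1 h₁.2.2, heq', NCPbij.toBlocks_pathOf h₂.2.1 h₂.2.2]
  · -- SurjOn
    intro i hi
    obtain ⟨hb, hs, ht⟩ := hi
    have H1 : ∀ m, -1 ≤ i m := fun m => (hb m).1
    have H2 : ∀ m, NCPbij.S i m ≤ 0 := fun m => hs m
    refine ⟨NCPbij.toBlocks i, ?_, ?_⟩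
    · rw [Set.mem_setOf_eq, NCPartitions, Finset.mem_filter]
      exact ⟨Finset.mem_univ _, NCPbij.toBlocks_isPartition,
        NCPbij.toBlocks_noCrossing H1 H2 ht⟩
    · exact NCPbij.pathOf_toBlocks H1 H2 ht
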